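/- Let f be any smooth real function and let u(t,x) be a smooth real-valued solution of the gKN equation with f, such that u_x(t,x) ≠ 0 for all (t,x). Define T₁(t,x) = (1/2)·u_xx²/u_x² + (1/3)·f(u)/u_x² and X₁(t,x) = −u_xxxx·u_xx/u_x² + (1/2)·u_xxx²/u_x² + (2/3)·u_xxx·(3u_xx² + f(u))/u_x³ − (9/8)·u_xx⁴/u_x⁴ + (1/2)·u_xx²·f(u)/u_x⁴ − u_xx·f'(u)/u_x² + (1/6)·f(u)²/u_x⁴, where all derivatives of u are evaluated at (t,x). Then ∂_t T₁(t,x) + ∂_x X₁(t,x) = 0 at every point (t,x). (T₁ is the lowest-order Hamiltonian conserved density of the gKN equation, admitted for arbitrary f.) -/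

import Mathlib

open Real

set_option maxHeartbeats 1600000

/-- Partial derivative with respect to the second (spatial) variable. -/
noncomputable def pdx (u : ℝ → ℝ → ℝ) : ℝ → ℝ → ℝ := fun t x => deriv (fun y => u t y) x

/-- Partial derivative with respect to the first (time) variable. -/
noncomputable def pdt (u : ℝ → ℝ → ℝ) : ℝ → ℝ → ℝ := fun t x => deriv (fun s => u s x) t

/-- `u` solves the generalized Krichever-Novikov equation with nonlinearity `f`:
`u_t = u_xxx - (3/2) u_xx^2/u_x + f(u)/u_x`. -/
def isGKN (f : ℝ → ℝ) (u : ℝ → ℝ → ℝ) : Prop :=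
  ∀ t x, pdt u t x =
    pdx (pdx (pdx u)) t x - (3/2) * (pdx (pdx u) t x)^2 / pdx u t x + f (u t x) / pdx u t x

/-- A conservation law: `∂_t T + ∂_x X = 0` at every point. -/
def consLaw (T X : ℝ → ℝ → ℝ) : Prop := ∀ t x, pdt T t x + pdx X t x = 0

/-- The conserved density `T₁ = (1/2) u_xx²/u_x² + (1/3) f(u)/u_x²`. -/
noncomputable def T1 (f : ℝ → ℝ) (u : ℝ → ℝ → ℝ) : ℝ → ℝ → ℝ := fun t x =>
  (1/2) * (pdx (pdx u) t x)^2 / (pdx u t x)^2 + (1/3) * f (u t x) / (pdx u t x)^2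

/-- The flux `X₁` corresponding to `T₁`. -/
noncomputable def X1 (f : ℝ → ℝ) (u : ℝ → ℝ → ℝ) : ℝ → ℝ → ℝ := fun t x =>
  -((pdx (pdx (pdx (pdx u))) t x) * (pdx (pdx u) t x) / (pdx u t x)^2) + (1/2) * (pdx (pdx (pdx u)) t x)^2 / (pdx u t x)^2
    + (2/3) * (pdx (pdx (pdx u)) t x) * (3 * (pdx (pdx u) t x)^2 + f (u t x)) / (pdx u t x)^3
    - (9/8) * (pdx (pdx u) t x)^4 / (pdx u t x)^4 + (1/2) * (pdx (pdx u) t x)^2 * (f (u t x)) / (pdx u t x)^4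
    - (pdx (pdx u) t x) * (deriv f (u t x)) / (pdx u t x)^2 + (1/6) * (f (u t x))^2 / (pdx u t x)^4

namespace gKNaux

open Function

variable {v : ℝ → ℝ → ℝ}

lemma slice_x_hasDerivAt (hv : ContDiff ℝ (⊤:ℕ∞) (uncurry v)) (t x : ℝ) :
    HasDerivAt (fun y => v t y) (fderiv ℝ (uncurry v) (t, x) (0, 1)) x := by
  have h1 : HasDerivAt (fun y => ((t, y) : ℝ × ℝ)) ((0:ℝ), (1:ℝ)) x :=
    (hasDerivAt_const x t).prodMk (hasDerivAt_id x)
  have h2 := ((hv.differentiable (by simp)) (t, x)).hasFDerivAt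
  exact h2.comp_hasDerivAt x h1

lemma slice_t_hasDerivAt (hv : ContDiff ℝ (⊤:ℕ∞) (uncurry v)) (t x : ℝ) :
    HasDerivAt (fun s => v s x) (fderiv ℝ (uncurry v) (t, x) (1, 0)) t := by
  have h1 : HasDerivAt (fun s => ((s, x) : ℝ × ℝ)) ((1:ℝ), (0:ℝ)) t :=
    (hasDerivAt_id t).prodMk (hasDerivAt_const t x)
  have h2 := ((hv.differentiable (by simp)) (t, x)).hasFDerivAt
  exact h2.comp_hasDerivAt t h1

lemma pdx_eq (hv : ContDiff ℝ (⊤:ℕ∞) (uncurry v)) :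
    pdx v = fun t x => fderiv ℝ (uncurry v) (t, x) (0, 1) := by
  funext t x
  exact (slice_x_hasDerivAt hv t x).deriv

lemma pdt_eq (hv : ContDiff ℝ (⊤:ℕ∞) (uncurry v)) :
    pdt v = fun t x => fderiv ℝ (uncurry v) (t, x) (1, 0) := by
  funext t x
  exact (slice_t_hasDerivAt hv t x).deriv

lemma smooth_dir (hv : ContDiff ℝ (⊤:ℕ∞) (uncurry v)) (w : ℝ × ℝ) :
    ContDiff ℝ (⊤:ℕ∞) (fun p : ℝ × ℝ => fderiv ℝ (uncurry v) p w) := by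
  have h := hv.fderiv_right (m := (⊤:ℕ∞)) (by exact_mod_cast le_rfl)
  exact h.clm_apply contDiff_const

lemma smooth_pdx (hv : ContDiff ℝ (⊤:ℕ∞) (uncurry v)) :
    ContDiff ℝ (⊤:ℕ∞) (uncurry (pdx v)) := by
  have h : uncurry (pdx v) = fun p : ℝ × ℝ => fderiv ℝ (uncurry v) p (0, 1) := by
    funext p
    exact congrFun (congrFun (pdx_eq hv) p.1) p.2
  rw [h]; exact smooth_dir hv _

lemma smooth_pdt (hv : ContDiff ℝ (⊤:ℕ∞) (uncurry v)) :
    ContDiff ℝ (⊤:ℕ∞) (uncurry (pdt v)) := by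
  have h : uncurry (pdt v) = fun p : ℝ × ℝ => fderiv ℝ (uncurry v) p (1, 0) := by
    funext p
    exact congrFun (congrFun (pdt_eq hv) p.1) p.2
  rw [h]; exact smooth_dir hv _

lemma pdt_pdx_comm (hv : ContDiff ℝ (⊤:ℕ∞) (uncurry v)) :
    pdt (pdx v) = pdx (pdt v) := by
  have hsym : ∀ p : ℝ × ℝ, IsSymmSndFDerivAt ℝ (uncurry v) p := fun p =>
    hv.contDiffAt.isSymmSndFDerivAt (by rw [minSmoothness_of_isRCLikeNormedField]; exact WithTop.coe_le_coe.mpr le_top)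
  have hdfd : ∀ (w : ℝ × ℝ) (p : ℝ × ℝ),
      fderiv ℝ (fun q : ℝ × ℝ => fderiv ℝ (uncurry v) q w) p =
        (fderiv ℝ (fderiv ℝ (uncurry v)) p).flip w := by
    intro w p
    have hc : DifferentiableAt ℝ (fderiv ℝ (uncurry v)) p :=
      ((hv.fderiv_right (m := (⊤:ℕ∞)) (by exact_mod_cast le_rfl)).differentiable
        (by simp)) p
    rw [fderiv_clm_apply hc (differentiableAt_const w)]
    simp
  funext t x
  have h1 : pdt (pdx v) t x
      = fderiv ℝ (fun q : ℝ × ℝ => fderiv ℝ (uncurry v) q (0,1)) (t,x) (1,0) := by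
    rw [pdx_eq hv]
    have h := pdt_eq (v := fun t x => fderiv ℝ (uncurry v) (t,x) (0,1)) (smooth_dir hv (0,1))
    exact congrFun (congrFun h t) x
  have h2 : pdx (pdt v) t x
      = fderiv ℝ (fun q : ℝ × ℝ => fderiv ℝ (uncurry v) q (1,0)) (t,x) (0,1) := by
    rw [pdt_eq hv]
    have h := pdx_eq (v := fun t x => fderiv ℝ (uncurry v) (t,x) (1,0)) (smooth_dir hv (1,0))
    exact congrFun (congrFun h t) x
  rw [h1, h2, hdfd, hdfd]
  simp only [ContinuousLinearMap.flip_apply]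
  exact hsym (t,x) _ _

lemma hasDerivAt_pdx (hv : ContDiff ℝ (⊤:ℕ∞) (uncurry v)) (t x : ℝ) :
    HasDerivAt (fun y => v t y) (pdx v t x) x := by
  simp only [pdx_eq hv]
  exact slice_x_hasDerivAt hv t x

lemma hasDerivAt_pdt (hv : ContDiff ℝ (⊤:ℕ∞) (uncurry v)) (t x : ℝ) :
    HasDerivAt (fun s => v s x) (pdt v t x) t := by
  simp only [pdt_eq hv]
  exact slice_t_hasDerivAt hv t x

/-- `E0 = u_t` by the gKN equation. -/
noncomputable def E0 (f : ℝ → ℝ) (u : ℝ → ℝ → ℝ) : ℝ → ℝ → ℝ := fun t x =>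
  pdx (pdx (pdx u)) t x - (3/2) * (pdx (pdx u) t x)^2 / pdx u t x + f (u t x) / pdx u t x

/-- `E1 = ∂ₓ E0`. -/
noncomputable def E1 (f : ℝ → ℝ) (u : ℝ → ℝ → ℝ) : ℝ → ℝ → ℝ := fun t x =>
  pdx (pdx (pdx (pdx u))) t x
    - 3 * pdx (pdx u) t x * pdx (pdx (pdx u)) t x / pdx u t x
    + (3/2) * (pdx (pdx u) t x)^3 / (pdx u t x)^2
    + deriv f (u t x)
    - f (u t x) * pdx (pdx u) t x / (pdx u t x)^2

/-- `E2 = ∂ₓ E1`. -/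
noncomputable def E2 (f : ℝ → ℝ) (u : ℝ → ℝ → ℝ) : ℝ → ℝ → ℝ := fun t x =>
  pdx (pdx (pdx (pdx (pdx u)))) t x
    - 3 * ((pdx (pdx (pdx u)) t x)^2 + pdx (pdx u) t x * pdx (pdx (pdx (pdx u))) t x) / pdx u t x
    + (15/2) * (pdx (pdx u) t x)^2 * pdx (pdx (pdx u)) t x / (pdx u t x)^2
    - 3 * (pdx (pdx u) t x)^4 / (pdx u t x)^3
    + deriv (deriv f) (u t x) * pdx u t x
    - deriv f (u t x) * pdx (pdx u) t x / pdx u t x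
    - f (u t x) * pdx (pdx (pdx u)) t x / (pdx u t x)^2
    + 2 * f (u t x) * (pdx (pdx u) t x)^2 / (pdx u t x)^3

variable (f : ℝ → ℝ) (u : ℝ → ℝ → ℝ)

lemma pdx_E0_eq (hf : ContDiff ℝ (⊤:ℕ∞) f) (hu : ContDiff ℝ (⊤:ℕ∞) (uncurry u))
    (hux : ∀ t x, pdx u t x ≠ 0) : pdx (E0 f u) = E1 f u := by
  have h1 := smooth_pdx hu
  have h2 := smooth_pdx h1
  have h3 := smooth_pdx h2
  funext t x
  have hp := hux t x
  have hP := hasDerivAt_pdx h1 t x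
  have hQ := hasDerivAt_pdx h2 t x
  have hR := hasDerivAt_pdx h3 t x
  have hU := hasDerivAt_pdx hu t x
  have hF : HasDerivAt (fun y => f (u t y)) (deriv f (u t x) * pdx u t x) x :=
    HasDerivAt.comp x (((hf.differentiable (by simp)) (u t x)).hasDerivAt) hU
  have key := (hR.sub (((hQ.pow 2).const_mul (3/2 : ℝ)).div hP hp)).add (hF.div hP hp)
  have hd : pdx (E0 f u) t x = _ := key.deriv
  rw [hd]
  simp only [E1, Pi.pow_apply, Pi.mul_apply, Pi.add_apply, Pi.sub_apply, Pi.div_apply, Pi.neg_apply]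
  field_simp
  ring

lemma pdx_E1_eq (hf : ContDiff ℝ (⊤:ℕ∞) f) (hu : ContDiff ℝ (⊤:ℕ∞) (uncurry u))
    (hux : ∀ t x, pdx u t x ≠ 0) : pdx (E1 f u) = E2 f u := by
  have hf' : ContDiff ℝ (⊤:ℕ∞) (deriv f) := (contDiff_infty_iff_deriv.mp hf).2
  have h1 := smooth_pdx hu
  have h2 := smooth_pdx h1
  have h3 := smooth_pdx h2
  have h4 := smooth_pdx h3
  funext t x
  have hp := hux t x
  have hp2 : (pdx u t x)^2 ≠ 0 := pow_ne_zero _ hp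
  have hP := hasDerivAt_pdx h1 t x
  have hQ := hasDerivAt_pdx h2 t x
  have hR := hasDerivAt_pdx h3 t x
  have hS := hasDerivAt_pdx h4 t x
  have hU := hasDerivAt_pdx hu t x
  have hF : HasDerivAt (fun y => f (u t y)) (deriv f (u t x) * pdx u t x) x :=
    HasDerivAt.comp x (((hf.differentiable (by simp)) (u t x)).hasDerivAt) hU
  have hF1 : HasDerivAt (fun y => deriv f (u t y)) (deriv (deriv f) (u t x) * pdx u t x) x :=
    HasDerivAt.comp x (((hf'.differentiable (by simp)) (u t x)).hasDerivAt) hU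
  have key := ((((hS.sub ((((hQ.const_mul (3:ℝ)).mul hR)).div hP hp)).add
      (((hQ.pow 3).const_mul (3/2 : ℝ)).div (hP.pow 2) hp2)).add hF1).sub
      ((hF.mul hQ).div (hP.pow 2) hp2))
  have hd : pdx (E1 f u) t x = _ := key.deriv
  rw [hd]
  simp only [E2, Pi.pow_apply, Pi.mul_apply, Pi.add_apply, Pi.sub_apply, Pi.div_apply, Pi.neg_apply]
  field_simp
  ring

end gKNaux

/-- `(T₁, X₁)` is a conservation law of the gKN equation for arbitrary smooth `f`. -/
theorem gKN_conservation_law_T1 (f : ℝ → ℝ) (hf : ContDiff ℝ (⊤ : ℕ∞) f)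
    (u : ℝ → ℝ → ℝ) (hu : ContDiff ℝ (⊤ : ℕ∞) (Function.uncurry u))
    (hux : ∀ t x, pdx u t x ≠ 0)
    (hsol : isGKN f u) :
    consLaw (T1 f u) (X1 f u) := by
  have hf' : ContDiff ℝ (⊤:ℕ∞) (deriv f) := (contDiff_infty_iff_deriv.mp hf).2
  have h1 := gKNaux.smooth_pdx hu
  have h2 := gKNaux.smooth_pdx h1
  have h3 := gKNaux.smooth_pdx h2
  have h4 := gKNaux.smooth_pdx h3
  have hpdt0 : pdt u = gKNaux.E0 f u := by
    funext t x; exact hsol t x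
  have hpdt1 : pdt (pdx u) = gKNaux.E1 f u := by
    rw [gKNaux.pdt_pdx_comm hu, hpdt0, gKNaux.pdx_E0_eq f u hf hu hux]
  have hpdt2 : pdt (pdx (pdx u)) = gKNaux.E2 f u := by
    rw [gKNaux.pdt_pdx_comm h1, hpdt1, gKNaux.pdx_E1_eq f u hf hu hux]
  intro t x
  have hp := hux t x
  have hp2 : (pdx u t x)^2 ≠ 0 := pow_ne_zero _ hp
  have hp3 : (pdx u t x)^3 ≠ 0 := pow_ne_zero _ hp
  have hp4 : (pdx u t x)^4 ≠ 0 := pow_ne_zero _ hp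
  -- time derivative of T1
  have hPt := gKNaux.hasDerivAt_pdt h1 t x
  have hQt := gKNaux.hasDerivAt_pdt h2 t x
  have hUt := gKNaux.hasDerivAt_pdt hu t x
  have hFt : HasDerivAt (fun s => f (u s x)) (deriv f (u t x) * pdt u t x) t :=
    HasDerivAt.comp t (((hf.differentiable (by simp)) (u t x)).hasDerivAt) hUt
  have keyT := (((hQt.pow 2).const_mul (1/2 : ℝ)).div (hPt.pow 2) hp2).add
    ((hFt.const_mul (1/3 : ℝ)).div (hPt.pow 2) hp2)
  have hTd : pdt (T1 f u) t x = _ := keyT.deriv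
  rw [hpdt0, hpdt1, hpdt2] at hTd
  -- space derivative of X1
  have hP := gKNaux.hasDerivAt_pdx h1 t x
  have hQ := gKNaux.hasDerivAt_pdx h2 t x
  have hR := gKNaux.hasDerivAt_pdx h3 t x
  have hS := gKNaux.hasDerivAt_pdx h4 t x
  have hU := gKNaux.hasDerivAt_pdx hu t x
  have hF : HasDerivAt (fun y => f (u t y)) (deriv f (u t x) * pdx u t x) x :=
    HasDerivAt.comp x (((hf.differentiable (by simp)) (u t x)).hasDerivAt) hU
  have hF1 : HasDerivAt (fun y => deriv f (u t y)) (deriv (deriv f) (u t x) * pdx u t x) x :=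
    HasDerivAt.comp x (((hf'.differentiable (by simp)) (u t x)).hasDerivAt) hU
  have hA := ((hS.mul hQ).div (hP.pow 2) hp2).neg
  have hB := ((hR.pow 2).const_mul (1/2 : ℝ)).div (hP.pow 2) hp2
  have hC := ((hR.const_mul (2/3 : ℝ)).mul (((hQ.pow 2).const_mul (3:ℝ)).add hF)).div (hP.pow 3) hp3
  have hD := ((hQ.pow 4).const_mul (9/8 : ℝ)).div (hP.pow 4) hp4
  have hE := (((hQ.pow 2).const_mul (1/2 : ℝ)).mul hF).div (hP.pow 4) hp4
  have hG := (hQ.mul hF1).div (hP.pow 2) hp2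
  have hH := ((hF.pow 2).const_mul (1/6 : ℝ)).div (hP.pow 4) hp4
  have keyX := (((((hA.add hB).add hC).sub hD).add hE).sub hG).add hH
  have hXd : pdx (X1 f u) t x = _ := keyX.deriv
  rw [hTd, hXd]
  simp only [gKNaux.E0, gKNaux.E1, gKNaux.E2, Pi.pow_apply, Pi.mul_apply, Pi.add_apply, Pi.sub_apply, Pi.div_apply, Pi.neg_apply]
  field_simp
  ring
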